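/- Let ε ∈ (0,1), let H be a symmetric n×n real matrix with ‖H‖ ≤ M, set H̄ = H + 2εI, κ = (M+2ε)/ε, and τ = √κ/(√κ+1). Let y_j, r_j, p_j (j = 0,…,Ĵ) be CG iterates for H̄ and g ≠ 0, with r_j ≠ 0 and p_jᵀ H̄ p_j ≥ ε‖p_j‖² for j = 0,…,Ĵ−1. Define Φ_0(z) = q(y_0) + (ε/2)‖z−y_0‖² and Φ_{j+1}(z) = τΦ_j(z) + (1−τ)(q(y_j) + r_jᵀ(z−y_j) + (ε/2)‖z−y_j‖²) for j = 0,…,Ĵ−1, and let Φ_j* denote the minimum value of Φ_j over ℝⁿ. Then q(y_j) ≤ Φ_j* for all j = 0,…,Ĵ. -/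

import Mathlib

open RealInnerProductSpace

/-- Auxiliary recursion: minimizers of the estimating functions `Φ_j`. -/
noncomputable def stmt2vA {n : ℕ} (τ ε : ℝ) (y r : ℕ → EuclideanSpace ℝ (Fin n)) :
    ℕ → EuclideanSpace ℝ (Fin n)
  | 0 => 0
  | (j+1) => τ • stmt2vA τ ε y r j + (1-τ) • y j - ((1-τ)/ε) • r j

/-- A vector orthogonal to all generators is orthogonal to the span. -/
theorem stmt2_inner_span_zero {n : ℕ} (x : EuclideanSpace ℝ (Fin n))
    (s : Set (EuclideanSpace ℝ (Fin n))) (h : ∀ a ∈ s, ⟪x, a⟫ = 0) :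
    ∀ u ∈ Submodule.span ℝ s, ⟪x, u⟫ = 0 := by
  intro u hu
  induction hu using Submodule.span_induction with
  | mem a ha => exact h a ha
  | zero => simp
  | add a b _ _ ha hb => rw [inner_add_right, ha, hb]; ring
  | smul c a _ ha => rw [real_inner_smul_right, ha]; ring

/-- Quadratic-completion identity for the estimate-sequence recursion. -/
theorem stmt2_quadId {n : ℕ} (ε τ : ℝ) (hε : ε ≠ 0)
    (z v y r : EuclideanSpace ℝ (Fin n)) :
    τ * (ε/2 * ‖z - v‖^2) + (1-τ) * (⟪r, z - y⟫ + ε/2 * ‖z - y‖^2)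
      = ε/2 * ‖z - (τ • v + (1-τ) • y - ((1-τ)/ε) • r)‖^2
        + τ*(1-τ) * (ε/2 * ‖v - y‖^2) + τ*(1-τ) * ⟪r, v - y⟫
        - (1-τ)^2/(2*ε) * ‖r‖^2 := by
  simp only [← real_inner_self_eq_norm_sq]
  simp only [inner_sub_left, inner_sub_right, inner_add_left, inner_add_right,
    real_inner_smul_left, real_inner_smul_right]
  simp only [real_inner_comm v z, real_inner_comm y z, real_inner_comm r z,
    real_inner_comm y v, real_inner_comm r v, real_inner_comm r y]
  field_simp
  ring

set_option maxHeartbeats 1000000 in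
theorem stmt2
    {n : ℕ} (H : EuclideanSpace ℝ (Fin n) →L[ℝ] EuclideanSpace ℝ (Fin n))
    (hsym : ∀ x y : EuclideanSpace ℝ (Fin n), ⟪H x, y⟫ = ⟪x, H y⟫)
    (ε M : ℝ) (hε : ε ∈ Set.Ioo (0:ℝ) 1) (hM : ‖H‖ ≤ M)
    (Hb : EuclideanSpace ℝ (Fin n) →L[ℝ] EuclideanSpace ℝ (Fin n))
    (hHb : ∀ x : EuclideanSpace ℝ (Fin n), Hb x = H x + (2*ε) • x)
    (κ τ : ℝ)
    (hκ : κ = (M + 2*ε)/ε)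
    (hτ : τ = Real.sqrt κ / (Real.sqrt κ + 1))
    (g : EuclideanSpace ℝ (Fin n)) (hg : g ≠ 0)
    (q : EuclideanSpace ℝ (Fin n) → ℝ)
    (hq : ∀ z, q z = 1/2 * ⟪z, Hb z⟫ + ⟪g, z⟫)
    (J : ℕ)
    (y r p : ℕ → EuclideanSpace ℝ (Fin n)) (α : ℕ → ℝ)
    (hy0 : y 0 = 0) (hr0 : r 0 = g) (hp0 : p 0 = -g)
    (hα : ∀ j < J, α j = ‖r j‖^2 / ⟪p j, Hb (p j)⟫)
    (hyrec : ∀ j < J, y (j+1) = y j + α j • p j)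
    (hrrec : ∀ j < J, r (j+1) = r j + α j • Hb (p j))
    (hprec : ∀ j < J, p (j+1) = -(r (j+1)) + (‖r (j+1)‖^2 / ‖r j‖^2) • p j)
    (hrne : ∀ j < J, r j ≠ 0)
    (hpcurv : ∀ j < J, ⟪p j, Hb (p j)⟫ ≥ ε * ‖p j‖^2)
    (Φ : ℕ → EuclideanSpace ℝ (Fin n) → ℝ)
    (hΦ0 : ∀ z, Φ 0 z = q (y 0) + ε/2 * ‖z - y 0‖^2)
    (hΦrec : ∀ j < J, ∀ z, Φ (j+1) z =
      τ * Φ j z + (1-τ) * (q (y j) + ⟪r j, z - y j⟫ + ε/2 * ‖z - y j‖^2)) :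
    ∀ j ≤ J, q (y j) ≤ ⨅ z : EuclideanSpace ℝ (Fin n), Φ j z := by
  obtain ⟨hε0, hε1⟩ := hε
  have hM0 : (0:ℝ) ≤ M := le_trans (norm_nonneg H) hM
  have hκε : κ * ε = M + 2*ε := by rw [hκ, div_mul_cancel₀ _ (ne_of_gt hε0)]
  have hκεpos : 0 < κ * ε := by rw [hκε]; linarith
  have hκ0 : 0 < κ := by
    have := hκεpos
    nlinarith
  have hsq1 : 1 ≤ Real.sqrt κ := by
    have h2 : 2 ≤ κ := by
      rw [hκ, le_div_iff₀ hε0]; linarith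
    have := Real.sqrt_le_sqrt (show (1:ℝ) ≤ κ by linarith)
    simpa using this
  have hsqpos : 0 < Real.sqrt κ + 1 := by linarith
  have hτ0 : 0 ≤ τ := by
    rw [hτ]; exact div_nonneg (Real.sqrt_nonneg _) hsqpos.le
  have hτ1 : τ ≤ 1 := by
    rw [hτ, div_le_one hsqpos]; linarith
  have hτκ : (1-τ)^2 ≤ 1/κ := by
    have h1τ : 1 - τ = 1/(Real.sqrt κ + 1) := by
      rw [hτ]; field_simp; ring
    have hsq2 : Real.sqrt κ ^ 2 = κ := Real.sq_sqrt hκ0.le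
    rw [h1τ, div_pow, one_pow, div_le_div_iff₀ (by positivity) hκ0]
    nlinarith [Real.sqrt_nonneg κ]
  -- symmetry and norm bound for Hb
  have hHbsym : ∀ a b : EuclideanSpace ℝ (Fin n), ⟪Hb a, b⟫ = ⟪a, Hb b⟫ := by
    intro a b
    rw [hHb a, hHb b, inner_add_left, inner_add_right, real_inner_smul_left,
      real_inner_smul_right, hsym]
  have hHbnorm : ∀ x : EuclideanSpace ℝ (Fin n), ‖Hb x‖ ≤ (κ*ε) * ‖x‖ := by
    intro x
    rw [hHb x, hκε]
    calc ‖H x + (2*ε) • x‖ ≤ ‖H x‖ + ‖(2*ε) • x‖ := norm_add_le _ _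
      _ ≤ M * ‖x‖ + (2*ε) * ‖x‖ := by
          have h1 : ‖H x‖ ≤ ‖H‖ * ‖x‖ := H.le_opNorm x
          have h2 : ‖(2*ε) • x‖ = |2*ε| * ‖x‖ := by rw [norm_smul, Real.norm_eq_abs]
          have h3 : |2*ε| = 2*ε := abs_of_pos (by linarith)
          nlinarith [norm_nonneg x, mul_le_mul_of_nonneg_right hM (norm_nonneg x)]
      _ = (M + 2*ε) * ‖x‖ := by ring
  -- expansion of q
  have hq' : ∀ a d : EuclideanSpace ℝ (Fin n),
      q (a + d) = q a + ⟪Hb a + g, d⟫ + 1/2 * ⟪d, Hb d⟫ := by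
    intro a d
    have e1 : ⟪d, Hb a⟫ = ⟪Hb a, d⟫ := real_inner_comm _ _
    have e2 : ⟪a, Hb d⟫ = ⟪Hb a, d⟫ := (hHbsym a d).symm
    simp only [hq, map_add, inner_add_left, inner_add_right]
    rw [e1, e2]; ring
  -- gradient identity
  have hgrad : ∀ j, j ≤ J → r j = Hb (y j) + g := by
    intro j
    induction j with
    | zero => intro _; rw [hr0, hy0, map_zero, zero_add]
    | succ j ih =>
      intro hj
      have hjJ : j < J := by omega
      rw [hrrec j hjJ, hyrec j hjJ, map_add, map_smul, ih (by omega)]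
      abel
  -- key CG identities
  have key : ∀ N j, j ≤ N → j ≤ J →
      (∀ m < j, ⟪r j, p m⟫ = 0) ∧ (∀ m < j, ⟪p m, Hb (p j)⟫ = 0) := by
    intro N
    induction N with
    | zero =>
      intro j hj0 _
      have : j = 0 := by omega
      subst this
      exact ⟨fun m hm => absurd hm (Nat.not_lt_zero m),
             fun m hm => absurd hm (Nat.not_lt_zero m)⟩
    | succ N ih =>
      intro j hjN hjJ
      rcases Nat.lt_or_ge j (N+1) with hlt | hge
      · exact ih j (by omega) hjJ
      · have hjeq : j = N+1 := by omega
        subst hjeq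
        have hNJ : N < J := by omega
        have hORT : ∀ k, k ≤ N → ∀ m < k, ⟪r k, p m⟫ = 0 :=
          fun k hk => (ih k hk (by omega)).1
        have hCONJ : ∀ k, k ≤ N → ∀ m < k, ⟪p m, Hb (p k)⟫ = 0 :=
          fun k hk => (ih k hk (by omega)).2
        have hRne : ∀ k, k ≤ N → ‖r k‖^2 ≠ 0 := by
          intro k hk
          exact pow_ne_zero _ (norm_ne_zero_iff.mpr (hrne k (by omega)))
        have hrpself : ∀ k, k ≤ N → ⟪r k, p k⟫ = -‖r k‖^2 := by
          intro k hk
          match k with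
          | 0 =>
            rw [hr0, hp0, inner_neg_right, real_inner_self_eq_norm_sq]
          | (m+1) =>
            have hmJ : m < J := by omega
            rw [hprec m hmJ, inner_add_right, inner_neg_right, real_inner_smul_right,
              hORT (m+1) hk m (Nat.lt_succ_self m), real_inner_self_eq_norm_sq]
            ring
        have hαs : ∀ k, k ≤ N → α k * ⟪p k, Hb (p k)⟫ = ‖r k‖^2 ∧ α k ≠ 0 := by
          intro k hk
          have hkJ : k < J := by omega
          have hpk : p k ≠ 0 := by
            intro h0
            have h1 := hrpself k hk
            rw [h0, inner_zero_right] at h1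
            exact hRne k hk (by linarith)
          have hσ : 0 < ⟪p k, Hb (p k)⟫ := by
            have h1 : 0 < ε * ‖p k‖^2 := by
              have : 0 < ‖p k‖ := norm_pos_iff.mpr hpk
              positivity
            linarith [hpcurv k hkJ]
          constructor
          · rw [hα k hkJ]; exact div_mul_cancel₀ _ hσ.ne'
          · rw [hα k hkJ]
            exact div_ne_zero (hRne k hk) hσ.ne'
        have hORTs : ∀ m < N+1, ⟪r (N+1), p m⟫ = 0 := by
          intro m hm
          rw [hrrec N hNJ, inner_add_left, real_inner_smul_left]
          rcases Nat.lt_succ_iff_lt_or_eq.mp hm with hmN | rfl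
          · rw [hORT N le_rfl m hmN, real_inner_comm (p m) (Hb (p N)),
              hCONJ N le_rfl m hmN]
            ring
          · rw [hrpself m le_rfl, real_inner_comm (p m) (Hb (p m))]
            have := (hαs m le_rfl).1
            linarith
        have hrr : ∀ k, k ≤ N → ⟪r (N+1), r k⟫ = 0 := by
          intro k hk
          match k with
          | 0 =>
            have h0 : r 0 = (-1:ℝ) • p 0 := by rw [hr0, hp0]; simp
            rw [h0, real_inner_smul_right, hORTs 0 (by omega)]; ring
          | (m+1) =>
            have hmJ : m < J := by omega
            have h1 : r (m+1) = (‖r (m+1)‖^2/‖r m‖^2) • p m - p (m+1) := by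
              rw [hprec m hmJ]; abel
            rw [h1, inner_sub_right, real_inner_smul_right,
              hORTs m (by omega), hORTs (m+1) (by omega)]
            ring
        have hCONJs : ∀ m < N+1, ⟪p m, Hb (p (N+1))⟫ = 0 := by
          intro m hm
          have hm' : m ≤ N := by omega
          have hmJ : m < J := by omega
          rw [← hHbsym (p m) (p (N+1)), real_inner_comm (p (N+1)) (Hb (p m)),
            hprec N hNJ, inner_add_left, inner_neg_left, real_inner_smul_left]
          have hsm : α m • Hb (p m) = r (m+1) - r m := by rw [hrrec m hmJ]; abel
          have hps : ⟪p (N+1) - p (N+1), p m⟫ = 0 := by simp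
          rcases Nat.lt_or_ge m N with hmN | hge2
          · have h1 : α m * ⟪r (N+1), Hb (p m)⟫ = 0 := by
              rw [← real_inner_smul_right, hsm, inner_sub_right,
                hrr (m+1) (by omega), hrr m (by omega)]
              ring
            have h2 : ⟪r (N+1), Hb (p m)⟫ = 0 := by
              rcases mul_eq_zero.mp h1 with h | h
              · exact absurd h (hαs m hm').2
              · exact h
            have h3 : ⟪p N, Hb (p m)⟫ = 0 := by
              rw [← hHbsym (p N) (p m), real_inner_comm (p m) (Hb (p N))]
              · exact hCONJ N le_rfl m hmN
            rw [h2, h3]; ring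
          · have hmeq : m = N := by omega
            subst hmeq
            have e3 : α m * ⟪r (m+1), Hb (p m)⟫ = ‖r (m+1)‖^2 := by
              rw [← real_inner_smul_right, hsm, inner_sub_right, hrr m le_rfl,
                real_inner_self_eq_norm_sq]
              ring
            have e4 := (hαs m le_rfl).1
            have hRm := hRne m le_rfl
            have hαne := (hαs m le_rfl).2
            have key2 : α m * (-⟪r (m+1), Hb (p m)⟫
                + ‖r (m+1)‖^2/‖r m‖^2 * ⟪p m, Hb (p m)⟫) = 0 := by
              calc α m * (-⟪r (m+1), Hb (p m)⟫
                  + ‖r (m+1)‖^2/‖r m‖^2 * ⟪p m, Hb (p m)⟫)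
                  = -(α m * ⟪r (m+1), Hb (p m)⟫)
                    + ‖r (m+1)‖^2/‖r m‖^2 * (α m * ⟪p m, Hb (p m)⟫) := by ring
                _ = -(‖r (m+1)‖^2) + ‖r (m+1)‖^2/‖r m‖^2 * ‖r m‖^2 := by rw [e3, e4]
                _ = 0 := by rw [div_mul_cancel₀ _ hRm]; ring
            exact (mul_eq_zero.mp key2).resolve_left hαne
        exact ⟨hORTs, hCONJs⟩
  have key' : ∀ j, j ≤ J →
      (∀ m < j, ⟪r j, p m⟫ = 0) ∧ (∀ m < j, ⟪p m, Hb (p j)⟫ = 0) :=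
    fun j hj => key j j le_rfl hj
  -- Krylov subspaces
  have hSmono : ∀ i j : ℕ, i ≤ j → Submodule.span ℝ (p '' Set.Iio i) ≤ Submodule.span ℝ (p '' Set.Iio j) := by
    intro i j hij
    exact Submodule.span_mono (Set.image_mono (fun m hm => lt_of_lt_of_le hm hij))
  have hpmem : ∀ i j : ℕ, i < j → p i ∈ Submodule.span ℝ (p '' Set.Iio j) :=
    fun i j hij => Submodule.subset_span ⟨i, hij, rfl⟩
  have hrmem : ∀ j, j ≤ J → r j ∈ Submodule.span ℝ (p '' Set.Iio (j+1)) := by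
    intro j hj
    match j with
    | 0 =>
      have h0 : r 0 = (-1:ℝ) • p 0 := by rw [hr0, hp0]; simp
      rw [h0]
      exact Submodule.smul_mem _ _ (hpmem 0 1 (by omega))
    | (m+1) =>
      have hmJ : m < J := by omega
      have h1 : r (m+1) = (‖r (m+1)‖^2/‖r m‖^2) • p m - p (m+1) := by
        rw [hprec m hmJ]; abel
      rw [h1]
      exact Submodule.sub_mem _ (Submodule.smul_mem _ _ (hpmem m (m+2) (by omega)))
        (hpmem (m+1) (m+2) (by omega))
  have hort : ∀ j, j ≤ J → ∀ u ∈ Submodule.span ℝ (p '' Set.Iio j), ⟪r j, u⟫ = 0 := by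
    intro j hj u hu
    refine stmt2_inner_span_zero (r j) _ ?_ u hu
    rintro a ⟨i, hi, rfl⟩
    exact (key' j hj).1 i hi
  have hpsd : ∀ j, j ≤ J → ∀ u ∈ Submodule.span ℝ (p '' Set.Iio j), 0 ≤ ⟪u, Hb u⟫ := by
    intro j
    induction j with
    | zero =>
      intro _ u hu
      have himg : p '' Set.Iio (0:ℕ) = ∅ := by
        have : Set.Iio (0:ℕ) = ∅ := by ext m; simp
        rw [this, Set.image_empty]
      rw [himg, Submodule.span_empty, Submodule.mem_bot] at hu
      subst hu; simp
    | succ j ih =>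
      intro hj u hu
      have hjJ : j < J := by omega
      have hIio : Set.Iio (j+1) = insert j (Set.Iio j) := by
        ext m; simp [Nat.lt_succ_iff, le_iff_lt_or_eq, or_comm]
      have himg : p '' Set.Iio (j+1) = insert (p j) (p '' Set.Iio j) := by
        rw [hIio, Set.image_insert_eq]
      rw [himg] at hu
      obtain ⟨c, u', hu', rfl⟩ := Submodule.mem_span_insert.mp hu
      have hcross : ⟪Hb (p j), u'⟫ = 0 := by
        refine stmt2_inner_span_zero (Hb (p j)) _ ?_ u' hu'
        rintro a ⟨i, hi, rfl⟩
        rw [real_inner_comm]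
        exact (key' j (by omega)).2 i hi
      have hcross1 : ⟪u', Hb (p j)⟫ = 0 := by rw [real_inner_comm]; exact hcross
      have hcross2 : ⟪p j, Hb u'⟫ = 0 := by rw [← hHbsym]; exact hcross
      have hσ : 0 ≤ ⟪p j, Hb (p j)⟫ := by
        have h1 : 0 ≤ ε * ‖p j‖^2 := by positivity
        linarith [hpcurv j hjJ]
      have hu'' : 0 ≤ ⟪u', Hb u'⟫ := ih (by omega) u' hu'
      have expand : ⟪c • p j + u', Hb (c • p j + u')⟫
          = c*c*⟪p j, Hb (p j)⟫ + c*⟪p j, Hb u'⟫ + c*⟪u', Hb (p j)⟫ + ⟪u', Hb u'⟫ := by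
        simp only [map_add, map_smul, inner_add_left, inner_add_right,
          real_inner_smul_left, real_inner_smul_right]
        ring
      rw [expand, hcross1, hcross2]
      nlinarith [mul_self_nonneg c]
  have hymem : ∀ j, j ≤ J → y j ∈ Submodule.span ℝ (p '' Set.Iio j) := by
    intro j
    induction j with
    | zero => intro _; rw [hy0]; exact Submodule.zero_mem _
    | succ j ih =>
      intro hj
      have hjJ : j < J := by omega
      rw [hyrec j hjJ]
      exact Submodule.add_mem _ (hSmono j (j+1) (by omega) (ih (by omega)))
        (Submodule.smul_mem _ _ (hpmem j (j+1) (by omega)))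
  have hqmin : ∀ j, j ≤ J → ∀ u ∈ Submodule.span ℝ (p '' Set.Iio j), q (y j) ≤ q (y j + u) := by
    intro j hj u hu
    rw [hq' (y j) u, ← hgrad j hj]
    have h1 : ⟪r j, u⟫ = 0 := hort j hj u hu
    have h2 : 0 ≤ ⟪u, Hb u⟫ := hpsd j hj u hu
    linarith
  -- decrease property
  have hdec : ∀ j, j < J → q (y (j+1)) ≤ q (y j) - ‖r j‖^2/(2*(κ*ε)) := by
    intro j hj
    set d : EuclideanSpace ℝ (Fin n) := -((κ*ε)⁻¹) • r j with hd
    have h1 : q (y j + d) = q (y j) + ⟪Hb (y j) + g, d⟫ + 1/2 * ⟪d, Hb d⟫ := hq' _ _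
    have h2 : ⟪Hb (y j) + g, d⟫ = -((κ*ε)⁻¹) * ‖r j‖^2 := by
      rw [← hgrad j hj.le, hd, real_inner_smul_right, real_inner_self_eq_norm_sq]
    have h3 : ⟪d, Hb d⟫ = ((κ*ε)⁻¹)^2 * ⟪r j, Hb (r j)⟫ := by
      rw [hd, map_smul, real_inner_smul_left, real_inner_smul_right]
      ring
    have h4 : ⟪r j, Hb (r j)⟫ ≤ (κ*ε) * ‖r j‖^2 := by
      calc ⟪r j, Hb (r j)⟫ ≤ ‖r j‖ * ‖Hb (r j)‖ := real_inner_le_norm _ _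
        _ ≤ ‖r j‖ * ((κ*ε) * ‖r j‖) :=
            mul_le_mul_of_nonneg_left (hHbnorm (r j)) (norm_nonneg _)
        _ = (κ*ε) * ‖r j‖^2 := by ring
    have h5 : q (y j + d) ≤ q (y j) - ‖r j‖^2/(2*(κ*ε)) := by
      rw [h1, h2, h3]
      have hκεne : κ * ε ≠ 0 := hκεpos.ne'
      have h6 : 1/2 * (((κ*ε)⁻¹)^2 * ⟪r j, Hb (r j)⟫) ≤
          1/2 * (((κ*ε)⁻¹)^2 * ((κ*ε) * ‖r j‖^2)) := by
        have : (0:ℝ) ≤ 1/2 * ((κ*ε)⁻¹)^2 := by positivity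
        nlinarith [h4]
      have h7 : 1/2 * (((κ*ε)⁻¹)^2 * ((κ*ε) * ‖r j‖^2)) = ‖r j‖^2/(2*(κ*ε)) := by
        field_simp
      have h9 : ‖r j‖^2/(2*(κ*ε)) = 1/2 * ((κ*ε)⁻¹ * ‖r j‖^2) := by ring
      linarith
    have h8 : q (y (j+1)) ≤ q (y j + d) := by
      have hu : d - α j • p j ∈ Submodule.span ℝ (p '' Set.Iio (j+1)) := by
        refine Submodule.sub_mem _ ?_ (Submodule.smul_mem _ _ (hpmem j (j+1) (by omega)))
        rw [hd]
        exact Submodule.smul_mem _ _ (hrmem j hj.le)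
      have heq : y (j+1) + (d - α j • p j) = y j + d := by
        rw [hyrec j hj]; abel
      have := hqmin (j+1) (by omega) _ hu
      rwa [heq] at this
    linarith
  -- properties of vA
  set v : ℕ → EuclideanSpace ℝ (Fin n) := stmt2vA τ ε y r with hv
  have hv0 : v 0 = 0 := by rw [hv]; simp [stmt2vA]
  have hvs : ∀ j, v (j+1) = τ • v j + (1-τ) • y j - ((1-τ)/ε) • r j := by
    intro j; rw [hv]; simp [stmt2vA]
  have hwmem : ∀ j, j ≤ J → v j - y j ∈ Submodule.span ℝ (p '' Set.Iio j) := by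
    intro j
    induction j with
    | zero =>
      intro _
      rw [hv0, hy0]
      simp
    | succ j ih =>
      intro hj
      have hjJ : j < J := by omega
      have heq : v (j+1) - y (j+1) = τ • (v j - y j) - ((1-τ)/ε) • r j - α j • p j := by
        rw [hvs j, hyrec j hjJ]
        rw [smul_sub]
        module
      rw [heq]
      refine Submodule.sub_mem _ (Submodule.sub_mem _ ?_ ?_) ?_
      · exact Submodule.smul_mem _ _ (hSmono j (j+1) (by omega) (ih (by omega)))
      · exact Submodule.smul_mem _ _ (hrmem j (by omega))
      · exact Submodule.smul_mem _ _ (hpmem j (j+1) (by omega))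
  -- main induction
  have main : ∀ j, j ≤ J → ∀ z, q (y j) + ε/2 * ‖z - v j‖^2 ≤ Φ j z := by
    intro j
    induction j with
    | zero =>
      intro _ z
      rw [hΦ0 z, hv0, hy0]
    | succ j ih =>
      intro hj z
      have hjJ : j < J := by omega
      rw [hΦrec j hjJ z]
      have hIH := ih (by omega) z
      have hIH2 : τ * (q (y j) + ε/2 * ‖z - v j‖^2) ≤ τ * Φ j z :=
        mul_le_mul_of_nonneg_left hIH hτ0
      have hquad := stmt2_quadId ε τ hε0.ne' z (v j) (y j) (r j)
      rw [← hvs j] at hquad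
      have horthw : ⟪r j, v j - y j⟫ = 0 :=
        hort j hjJ.le _ (hwmem j hjJ.le)
      have hWnn : 0 ≤ τ*(1-τ) * (ε/2 * ‖v j - y j‖^2) :=
        mul_nonneg (mul_nonneg hτ0 (by linarith)) (by positivity)
      have hdecj := hdec j hjJ
      have hR0 : (0:ℝ) ≤ ‖r j‖^2 := by positivity
      have hcurv2 : (1-τ)^2/(2*ε) * ‖r j‖^2 ≤ ‖r j‖^2/(2*(κ*ε)) := by
        have hκu : (1-τ)^2 * κ ≤ 1 := by
          rw [← le_div_iff₀ hκ0]; exact hτκ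
        rw [div_mul_eq_mul_div, div_le_div_iff₀ (by linarith) (by positivity)]
        nlinarith [mul_le_mul_of_nonneg_right hκu
          (show (0:ℝ) ≤ ‖r j‖^2 * (2*ε) by positivity)]
      rw [horthw] at hquad
      linarith [hIH2, hquad, hWnn, hdecj, hcurv2]
  -- conclusion
  intro j hj
  refine le_ciInf fun z => ?_
  have h1 := main j hj z
  have h2 : 0 ≤ ε/2 * ‖z - v j‖^2 := by positivity
  linarith
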